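/- Let (X,r) be an indecomposable solution with Dehornoy class m. Then for every x ∈ X, m is the least positive integer l with π_l(x) = Id; in particular this least integer is the same for all x ∈ X. -/
import Mathlib


open Function

variable {X : Type*}

/-- The map `r(x,y) = (σ_x(y), τ_y(x))` built from two families of bijections. -/
def ybR (σ τ : X → Equiv.Perm X) : X × X → X × X :=
  fun p => (σ p.1 p.2, τ p.2 p.1)

/-- Apply a map `X × X → X × X` to the first two coordinates of a triple (`r × id`). -/
def lmap (r : X × X → X × X) : X × X × X → X × X × X :=
  fun p => ((r (p.1, p.2.1)).1, ((r (p.1, p.2.1)).2, p.2.2))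

/-- Apply a map `X × X → X × X` to the last two coordinates of a triple (`id × r`). -/
def rmap (r : X × X → X × X) : X × X × X → X × X × X :=
  fun p => (p.1, r p.2)

/-- A finite non-degenerate involutive set-theoretic solution of the Yang--Baxter
equation on a finite set `X` with `|X| > 1`. -/
structure YBSolution (X : Type*) [Fintype X] where
  σ : X → Equiv.Perm X
  τ : X → Equiv.Perm X
  card_gt_one : 1 < Fintype.card X
  involutive : ∀ p : X × X, ybR σ τ (ybR σ τ p) = p
  braid : lmap (ybR σ τ) ∘ rmap (ybR σ τ) ∘ lmap (ybR σ τ)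
        = rmap (ybR σ τ) ∘ lmap (ybR σ τ) ∘ rmap (ybR σ τ)

namespace YBSolution

variable [Fintype X]

/-- The diagonal map `T(x) = τ_x⁻¹(x)`. -/
def T (S : YBSolution X) (x : X) : X := (S.τ x).symm x

/-- The map `U(x) = σ_x⁻¹(x)`, the inverse of the diagonal map. -/
def U (S : YBSolution X) (x : X) : X := (S.σ x).symm x

/-- The `k`-cabled sigma maps (also denoted `π_k`):
`σ^{(k)}_x = σ_x ∘ σ_{U(x)} ∘ ⋯ ∘ σ_{U^{k-1}(x)}`. -/
def sigmaCab (S : YBSolution X) : ℕ → X → X → X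
  | 0, _ => id
  | k + 1, x => ⇑(S.σ x) ∘ S.sigmaCab k (S.U x)

/-- The composition `τ_{U^{k-1}(y)} ∘ ⋯ ∘ τ_{U(y)} ∘ τ_y`. -/
def tauChain (S : YBSolution X) : ℕ → X → X → X
  | 0, _ => id
  | k + 1, y => S.tauChain k (S.U y) ∘ ⇑(S.τ y)

/-- The `k`-cabled tau maps:
`τ^{(k)}_y = T^{k-1} ∘ τ_{U^{k-1}(y)} ∘ ⋯ ∘ τ_{U(y)} ∘ τ_y ∘ T^{-(k-1)}`,
where `T^{-(k-1)} = U^{k-1}` since `U` is the inverse of `T`. -/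
def tauCab (S : YBSolution X) (k : ℕ) (y : X) : X → X :=
  S.T^[k - 1] ∘ S.tauChain k y ∘ S.U^[k - 1]

/-- The `k`-cabled solution `r^{(k)}(x,y) = (σ^{(k)}_x(y), τ^{(k)}_y(x))`. -/
def rCab (S : YBSolution X) (k : ℕ) : X × X → X × X :=
  fun p => (S.sigmaCab k p.1 p.2, S.tauCab k p.2 p.1)

/-- The permutation group `𝒢(X,r)`, generated by the `σ_x`. -/
def G (S : YBSolution X) : Subgroup (Equiv.Perm X) :=
  Subgroup.closure (Set.range S.σ)

/-- The permutation group `𝒢(X,r^{(k)})` of the `k`-cabled solution,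
generated by the `σ^{(k)}_x`. -/
def Gcab (S : YBSolution X) (k : ℕ) : Subgroup (Equiv.Perm X) :=
  Subgroup.closure {g : Equiv.Perm X | ∃ x : X, ⇑g = S.sigmaCab k x}

/-- The orbit of `x` under the diagonal map `T`. -/
def Torbit (S : YBSolution X) (x : X) : Set X := {y | ∃ n : ℕ, S.T^[n] x = y}

/-- The orbit of `x` under `𝒢(X,r)`. -/
def Gorbit (S : YBSolution X) (x : X) : Set X := {y | ∃ g ∈ S.G, g x = y}

/-- The orbit of `x` under `𝒢(X,r^{(k)})`. -/
def GcabOrbit (S : YBSolution X) (k : ℕ) (x : X) : Set X :=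
  {y | ∃ g ∈ S.Gcab k, g x = y}

/-- A solution is indecomposable when `𝒢(X,r)` acts transitively on `X`. -/
def IsIndecomposable (S : YBSolution X) : Prop := ∀ x y : X, ∃ g ∈ S.G, g x = y

end YBSolution


namespace YBSolution

variable [Fintype X] (S : YBSolution X)

lemma braid_comp (x y z : X) :
    S.σ (S.σ x y) (S.σ (S.τ y x) z) = S.σ x (S.σ y z) := by
  have h := congrFun S.braid (x, y, z)
  simp only [Function.comp, lmap, rmap, ybR, Prod.mk.injEq] at h
  exact h.1

lemma inv_comp (x y : X) : S.σ (S.σ x y) (S.τ y x) = x := by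
  have h := S.involutive (x, y)
  simp only [ybR, Prod.mk.injEq] at h
  exact h.1

lemma sigma_U (x : X) : S.σ x (S.U x) = x := (S.σ x).apply_symm_apply x

lemma T_U (x : X) : S.T (S.U x) = x := by
  have h := S.inv_comp x (S.U x)
  rw [S.sigma_U] at h
  have h2 : S.τ (S.U x) x = S.U x := (S.σ x).injective (by rw [h, S.sigma_U])
  unfold T
  apply (S.τ (S.U x)).injective
  rw [Equiv.apply_symm_apply, h2]

lemma U_injective : Function.Injective S.U :=
  Function.LeftInverse.injective S.T_U

lemma U_sigma (x y : X) : S.U (S.σ y x) = S.σ (S.τ x y) (S.U x) := by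
  apply (S.σ (S.σ y x)).injective
  rw [S.sigma_U, S.braid_comp, S.sigma_U]

lemma sigma_cab_comm (l : ℕ) : ∀ x y z : X,
    S.σ y (S.sigmaCab l x z) =
      S.sigmaCab l (S.σ y x) (S.σ (S.tauChain l x y) z) := by
  induction l with
  | zero => intro x y z; simp [sigmaCab, tauChain]
  | succ l ih =>
    intro x y z
    show S.σ y (S.σ x (S.sigmaCab l (S.U x) z)) = _
    rw [← S.braid_comp y x, ih (S.U x) (S.τ x y) z, ← S.U_sigma]
    rfl

lemma sigma_cab_tau_chain (l : ℕ) : ∀ x y : X,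
    S.sigmaCab l (S.σ y x) (S.tauChain l x y) = y := by
  induction l with
  | zero => intro x y; simp [sigmaCab, tauChain]
  | succ l ih =>
    intro x y
    show S.σ (S.σ y x) (S.sigmaCab l (S.U (S.σ y x))
      (S.tauChain l (S.U x) (S.τ x y))) = y
    rw [S.U_sigma, ih (S.U x) (S.τ x y), S.inv_comp]

lemma tau_chain_eq_id (l : ℕ) (x : X) (h : S.sigmaCab l x = id) :
    ∀ y, S.tauChain l x y = y := by
  intro y
  set c := S.tauChain l x y with hc
  have h1 := S.sigma_cab_comm l x y (S.U c)
  rw [h, ← hc] at h1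
  have h2 : S.σ c (S.U c) = c := S.sigma_U c
  rw [h2] at h1
  have h3 : S.sigmaCab l (S.σ y x) c = y := by rw [hc]; exact S.sigma_cab_tau_chain l x y
  rw [h3] at h1
  have h1' : S.σ y (S.U c) = y := by simpa using h1
  have h5 : S.σ y (S.U y) = y := S.sigma_U y
  exact S.U_injective ((S.σ y).injective (h1'.trans h5.symm))

lemma sigma_cab_id_sigma (l : ℕ) (x y : X) (h : S.sigmaCab l x = id) :
    S.sigmaCab l (S.σ y x) = id := by
  funext w
  have h1 := S.sigma_cab_comm l x y ((S.σ y).symm w)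
  rw [h, S.tau_chain_eq_id l x h] at h1
  simpa using h1.symm

lemma sigma_cab_id_sigma_pow (l : ℕ) (x y : X) (h : S.sigmaCab l x = id) :
    ∀ k : ℕ, S.sigmaCab l ((S.σ y ^ k) x) = id := by
  intro k
  induction k generalizing x with
  | zero => simpa using h
  | succ k ih =>
    have : (S.σ y ^ (k + 1)) x = (S.σ y ^ k) (S.σ y x) := by
      rw [pow_succ, Equiv.Perm.mul_apply]
    rw [this]
    exact ih (S.σ y x) (S.sigma_cab_id_sigma l x y h)

lemma sigma_cab_id_sigma_inv (l : ℕ) (x y : X) (h : S.sigmaCab l x = id) :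
    S.sigmaCab l ((S.σ y)⁻¹ x) = id := by
  have hn : 0 < orderOf (S.σ y) := orderOf_pos _
  have hmul : S.σ y ^ (orderOf (S.σ y) - 1) * S.σ y = 1 := by
    rw [← pow_succ, Nat.sub_add_cancel hn, pow_orderOf_eq_one]
  have hinv : (S.σ y)⁻¹ = S.σ y ^ (orderOf (S.σ y) - 1) :=
    (eq_inv_of_mul_eq_one_left hmul).symm
  rw [hinv]
  exact S.sigma_cab_id_sigma_pow l x y h _

lemma sigma_cab_id_of_mem_G (l : ℕ) (g : Equiv.Perm X) (hg : g ∈ S.G)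
    (x : X) (h : S.sigmaCab l x = id) : S.sigmaCab l (g x) = id := by
  have key : ∀ g ∈ S.G, (∀ x, S.sigmaCab l x = id → S.sigmaCab l (g x) = id) ∧
      (∀ x, S.sigmaCab l x = id → S.sigmaCab l (g⁻¹ x) = id) := by
    intro g hg
    induction hg using Subgroup.closure_induction with
    | mem g hgmem =>
      obtain ⟨y, rfl⟩ := hgmem
      exact ⟨fun x h => S.sigma_cab_id_sigma l x y h,
             fun x h => S.sigma_cab_id_sigma_inv l x y h⟩
    | one => simp
    | mul a b ha hb iha ihb =>
      refine ⟨fun x h => ?_, fun x h => ?_⟩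
      · rw [Equiv.Perm.mul_apply]; exact iha.1 _ (ihb.1 _ h)
      · rw [mul_inv_rev, Equiv.Perm.mul_apply]; exact ihb.2 _ (iha.2 _ h)
    | inv a ha iha =>
      exact ⟨iha.2, by simpa using iha.1⟩
  exact (key g hg).1 x h

end YBSolution

/-- for an indecomposable solution with Dehornoy class `m`, for
every `x` the least positive `l` with `π_l(x) = Id` is exactly `m`. -/
theorem dehornoy_class_indecomposable [Fintype X] (S : YBSolution X)
    (hind : S.IsIndecomposable) (m : ℕ)
    (hm : IsLeast {m : ℕ | 0 < m ∧ ∀ x : X, S.sigmaCab m x = id} m) :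
    ∀ x : X, IsLeast {l : ℕ | 0 < l ∧ S.sigmaCab l x = id} m := by
  intro x₀
  constructor
  · exact ⟨hm.1.1, hm.1.2 x₀⟩
  · intro l hl
    obtain ⟨hl0, hlx⟩ := hl
    apply hm.2
    refine ⟨hl0, fun y => ?_⟩
    obtain ⟨g, hg, hgx⟩ := hind x₀ y
    rw [← hgx]
    exact S.sigma_cab_id_of_mem_G l g hg x₀ hlx
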